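/- In the 2-mixture model, the exponential pointwise mutual information is given by exp(PMI((i,j),(s,t))) = (N/4)(δ^{is} + δ^{it} + δ^{js} + δ^{jt}) for all unordered pairs (i,j), (s,t). In particular exp(PMI((i,i),(j,j))) = 0 for i ≠ j, exp(PMI((i,i),(i,j))) = N/2 for i ≠ j, and exp(PMI((i,i),(i,i))) = N. -/

import Mathlib

open scoped BigOperators

/-- Kronecker delta as a real number. -/
noncomputable def kdelta {N : ℕ} (i ℓ : Fin N) : ℝ := if i = ℓ then 1 else 0

/-- Conditional density of the unordered pair `(i,j)` given latent class `ℓ`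
in the 2-mixture model. -/
noncomputable def condDens {N : ℕ} (i j ℓ : Fin N) : ℝ :=
  (kdelta i ℓ + kdelta j ℓ) / ((N : ℝ) + 1)

/-- Marginal density of the unordered pair `(i,j)` in the 2-mixture model. -/
noncomputable def margDens {N : ℕ} (i j : Fin N) : ℝ :=
  (1 / (N : ℝ)) * ∑ ℓ, condDens i j ℓ

/-- The exponential pointwise mutual information between unordered pairs `(i,j)` and
`(s,t)` in the 2-mixture model:
`exp(PMI) = (1/N) ∑_ℓ [p_{X|Z}((i,j)|ℓ)/p_X((i,j))]·[p_{Y|Z}((s,t)|ℓ)/p_Y((s,t))]`. -/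
noncomputable def expPMI {N : ℕ} (i j s t : Fin N) : ℝ :=
  (1 / (N : ℝ)) * ∑ ℓ, (condDens i j ℓ / margDens i j) * (condDens s t ℓ / margDens s t)

/-- In the 2-mixture model,
`exp(PMI((i,j),(s,t))) = (N/4)(δ^{is} + δ^{it} + δ^{js} + δ^{jt})`; in particular
`exp(PMI((i,i),(j,j))) = 0` and `exp(PMI((i,i),(i,j))) = N/2` for `i ≠ j`, and
`exp(PMI((i,i),(i,i))) = N`. -/

lemma kdelta_sum {N : ℕ} (i : Fin N) : ∑ ℓ, kdelta i ℓ = 1 := by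
  simp [kdelta, Finset.sum_ite_eq]

lemma kdelta_mul_sum {N : ℕ} (i s : Fin N) :
    ∑ ℓ, kdelta i ℓ * kdelta s ℓ = kdelta i s := by
  simp only [kdelta, ite_mul, one_mul, zero_mul]
  rw [Finset.sum_ite_eq]
  simp [eq_comm]

lemma margDens_eq {N : ℕ} (hN : 0 < N) (i j : Fin N) :
    margDens i j = 2 / ((N : ℝ) * ((N : ℝ) + 1)) := by
  have hN' : (N : ℝ) ≠ 0 := Nat.cast_ne_zero.mpr hN.ne'
  have hN1 : (N : ℝ) + 1 ≠ 0 := by positivity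
  unfold margDens condDens
  rw [← Finset.sum_div, Finset.sum_add_distrib, kdelta_sum, kdelta_sum]
  field_simp
  ring

lemma ratio_eq {N : ℕ} (hN : 0 < N) (i j ℓ : Fin N) :
    condDens i j ℓ / margDens i j = (N : ℝ) * (kdelta i ℓ + kdelta j ℓ) / 2 := by
  have hN' : (N : ℝ) ≠ 0 := Nat.cast_ne_zero.mpr hN.ne'
  have hN1 : (N : ℝ) + 1 ≠ 0 := by positivity
  rw [margDens_eq hN]
  unfold condDens
  field_simp

lemma main_eq {N : ℕ} (hN : 0 < N) (i j s t : Fin N) :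
    expPMI i j s t =
      ((N : ℝ) / 4) * (kdelta i s + kdelta i t + kdelta j s + kdelta j t) := by
  have hN' : (N : ℝ) ≠ 0 := Nat.cast_ne_zero.mpr hN.ne'
  unfold expPMI
  rw [Finset.sum_congr rfl (fun ℓ _ => by rw [ratio_eq hN, ratio_eq hN])]
  have : ∀ ℓ : Fin N,
      (N : ℝ) * (kdelta i ℓ + kdelta j ℓ) / 2 * ((N : ℝ) * (kdelta s ℓ + kdelta t ℓ) / 2)
      = ((N : ℝ)^2 / 4) * (kdelta i ℓ * kdelta s ℓ + kdelta i ℓ * kdelta t ℓ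
          + kdelta j ℓ * kdelta s ℓ + kdelta j ℓ * kdelta t ℓ) := by
    intro ℓ; ring
  rw [Finset.sum_congr rfl (fun ℓ _ => this ℓ), ← Finset.mul_sum]
  rw [Finset.sum_add_distrib, Finset.sum_add_distrib, Finset.sum_add_distrib,
    kdelta_mul_sum, kdelta_mul_sum, kdelta_mul_sum, kdelta_mul_sum]
  field_simp

theorem two_mixture_expPMI {N : ℕ} (hN : 0 < N) :
    (∀ i j s t : Fin N, expPMI i j s t =
        ((N : ℝ) / 4) * (kdelta i s + kdelta i t + kdelta j s + kdelta j t)) ∧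
      (∀ i j : Fin N, i ≠ j → expPMI i i j j = 0) ∧
      (∀ i j : Fin N, i ≠ j → expPMI i i i j = (N : ℝ) / 2) ∧
      (∀ i : Fin N, expPMI i i i i = (N : ℝ)) := by
  refine ⟨main_eq hN, ?_, ?_, ?_⟩
  · intro i j h
    rw [main_eq hN]
    simp [kdelta, h, h.symm]
  · intro i j h
    rw [main_eq hN]
    simp [kdelta, h, h.symm]
    ring
  · intro i
    rw [main_eq hN]
    simp [kdelta]
    ring
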